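/- arXiv:1810.00391 — 10 statements merged into one kernel-verified Lean document; each statement's English description precedes it below -/
import Mathlib

section
/- For any positive real number x, the negative logarithm admits the integral representation: -log x = ∫₀^∞ (1/(t+x) - t/(t²+1)) dt. -/
set_option maxHeartbeats 1000000


open MeasureTheory Set Filter Topology

theorem neg_log_integral_repr (x : ℝ) (hx : 0 < x) :
    -Real.log x = ∫ t in Set.Ioi (0 : ℝ), (1 / (t + x) - t / (t ^ 2 + 1)) := by
  set f : ℝ → ℝ := fun t => Real.log (t + x) - Real.log (t ^ 2 + 1) / 2 with hf
  have hpos : ∀ t : ℝ, t ∈ Ici (0:ℝ) → 0 < t + x := fun t ht => by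
    have := ht.out; linarith
  have hpos2 : ∀ t : ℝ, (0:ℝ) < t ^ 2 + 1 := fun t => by positivity
  have hcont : ContinuousWithinAt f (Ici 0) 0 := by
    apply ContinuousWithinAt.sub
    · exact (Real.continuousAt_log (by linarith)).comp_continuousWithinAt
        ((continuous_id.add continuous_const).continuousWithinAt)
    · exact ((Real.continuousAt_log (by norm_num)).comp_continuousWithinAt
        (((continuous_pow 2).add continuous_const).continuousWithinAt :
          ContinuousWithinAt (fun t : ℝ => t ^ 2 + 1) _ _)).div_const 2
  have hderiv : ∀ t ∈ Ioi (0:ℝ), HasDerivAt f (1 / (t + x) - t / (t ^ 2 + 1)) t := by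
    intro t ht
    have h1 : HasDerivAt (fun t : ℝ => t + x) 1 t := (hasDerivAt_id t).add_const x
    have h2 : HasDerivAt (fun t : ℝ => t ^ 2 + 1) (2 * t) t := by
      simpa using ((hasDerivAt_pow 2 t).add_const 1)
    have hl1 := h1.log (ne_of_gt (hpos t (mem_Ici.mpr (le_of_lt (mem_Ioi.mp ht)))))
    have hl2 := h2.log (ne_of_gt (hpos2 t))
    have := hl1.sub (hl2.div_const 2)
    refine this.congr_deriv ?_
    ring
  have hbound : IntegrableOn (fun t => 1 / (t + x) - t / (t ^ 2 + 1)) (Ioi (0:ℝ)) := by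
    have hg : IntegrableOn (fun t : ℝ => (1/x + x) * (1 / (1 + t ^ 2))) (Ioi (0:ℝ)) := by
      simp only [one_div]
      exact (integrable_inv_one_add_sq.integrableOn).const_mul _
    apply Integrable.mono' hg
    · apply ContinuousOn.aestronglyMeasurable _ measurableSet_Ioi
      apply ContinuousOn.sub
      · exact ContinuousOn.div continuousOn_const
          ((continuous_id.add continuous_const).continuousOn)
          (fun t ht => ne_of_gt (hpos t (mem_Ici.mpr (le_of_lt (mem_Ioi.mp ht)))))
      · exact ContinuousOn.div continuousOn_id
          (((continuous_pow 2).add continuous_const).continuousOn)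
          (fun t _ => ne_of_gt (hpos2 t))
    · filter_upwards [ae_restrict_mem measurableSet_Ioi] with t ht
      have ht0 : (0:ℝ) < t := ht
      have htx : 0 < t + x := by linarith
      have h2 : (0:ℝ) < t ^ 2 + 1 := hpos2 t
      have hd : (0:ℝ) < (t + x) * (t ^ 2 + 1) := by positivity
      have heq : 1 / (t + x) - t / (t ^ 2 + 1) = (1 - t * x) / ((t + x) * (t ^ 2 + 1)) := by
        field_simp; ring
      rw [Real.norm_eq_abs, heq, abs_div, abs_of_pos hd, mul_one_div]
      have h3 : |1 - t * x| ≤ 1 + t * x := by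
        rw [abs_le]; constructor <;> nlinarith
      calc |1 - t * x| / ((t + x) * (t ^ 2 + 1))
          ≤ (1 + t * x) / ((t + x) * (t ^ 2 + 1)) := by
            gcongr
        _ ≤ (1 / x + x) / (1 + t ^ 2) := by
            rw [div_le_div_iff₀ hd (by positivity)]
            have hinv : 1 / x * x = 1 := one_div_mul_cancel (ne_of_gt hx)
            nlinarith [mul_pos (one_div_pos.mpr hx) (mul_pos ht0 h2),
              mul_nonneg (sq_nonneg x) h2.le, mul_pos (mul_pos ht0 hx) h2]
  have htend : Tendsto f atTop (𝓝 0) := by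
    have key : ∀ᶠ t : ℝ in atTop, f t = Real.log ((t + x) ^ 2 / (t ^ 2 + 1)) / 2 := by
      filter_upwards [eventually_gt_atTop 0] with t ht
      have htx : 0 < t + x := by linarith
      rw [hf]
      simp only
      rw [Real.log_div (by positivity) (ne_of_gt (hpos2 t)), Real.log_pow]
      push_cast
      ring
    rw [tendsto_congr' key]
    have hr : Tendsto (fun t : ℝ => (t + x) ^ 2 / (t ^ 2 + 1)) atTop (𝓝 1) := by
      have : ∀ᶠ t : ℝ in atTop, (t + x) ^ 2 / (t ^ 2 + 1)
          = (1 + x / t) ^ 2 / (1 + 1 / t ^ 2) := by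
        filter_upwards [eventually_gt_atTop 0] with t ht
        rw [div_eq_div_iff (by positivity) (by positivity)]
        field_simp
      rw [tendsto_congr' this]
      have h1 : Tendsto (fun t : ℝ => (1 + x / t) ^ 2) atTop (𝓝 1) := by
        have ha : Tendsto (fun t : ℝ => 1 + x / t) atTop (𝓝 (1 + 0)) :=
          tendsto_const_nhds.add (tendsto_const_nhds.div_atTop tendsto_id)
        simpa using ha.pow 2
      have h2 : Tendsto (fun t : ℝ => 1 + 1 / t ^ 2) atTop (𝓝 1) := by
        have ha : Tendsto (fun t : ℝ => 1 + 1 / t ^ 2) atTop (𝓝 (1 + 0)) :=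
          tendsto_const_nhds.add (tendsto_const_nhds.div_atTop
            (tendsto_pow_atTop two_ne_zero))
        simpa using ha
      have := h1.div h2 (by norm_num); rw [div_one] at this; exact this
    have := ((Real.continuousAt_log one_ne_zero).tendsto.comp hr).div_const 2
    simpa using this
  have := integral_Ioi_of_hasDerivAt_of_tendsto hcont hderiv hbound htend
  rw [this, hf]
  norm_num
end

section
/- For p ∈ (0,1) and any x > 0, one has -x^p = -cos(pπ/2) + (sin(pπ)/π) ∫₀^∞ t^p (1/(t+x) - t/(t²+1)) dt. -/
open MeasureTheory Real Set

lemma aux_integrableOn_of_bounds {f : ℝ → ℝ} (hf : Measurable f) {b c C : ℝ}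
    (hb : -1 < b) (hc : c < -1)
    (h1 : ∀ t ∈ Ioc (0:ℝ) 1, ‖f t‖ ≤ C * t ^ b) (h2 : ∀ t ∈ Ioi (1:ℝ), ‖f t‖ ≤ t ^ c) :
    IntegrableOn f (Ioi (0:ℝ)) := by
  rw [← Ioc_union_Ioi_eq_Ioi (zero_le_one : (0:ℝ) ≤ 1), integrableOn_union]
  constructor
  · refine Integrable.mono' (g := fun t => C * t ^ b) ?_ hf.aestronglyMeasurable.restrict ?_
    · refine Integrable.const_mul ?_ C
      have := intervalIntegral.intervalIntegrable_rpow' (a := 0) (b := 1) hb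
      rwa [intervalIntegrable_iff_integrableOn_Ioc_of_le zero_le_one] at this
    · filter_upwards [ae_restrict_mem measurableSet_Ioc] with t ht using h1 t ht
  · refine Integrable.mono' (integrableOn_Ioi_rpow_of_lt hc one_pos) hf.aestronglyMeasurable.restrict ?_
    filter_upwards [ae_restrict_mem measurableSet_Ioi] with t ht using h2 t ht
lemma aux_key {a : ℝ} (h0 : 0 < a) (h1 : a < 1) :
    ∫ t in Ioi (0:ℝ), t ^ (a - 1) / (1 + t) = π / Real.sin (π * a) := by
  rw [← Real.Gamma_mul_Gamma_one_sub a]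
  set ν : Measure ℝ := volume.restrict (Ioi 0) with hν
  set F : ℝ × ℝ → ℝ := fun q => q.1 ^ (a - 1) * Real.exp (-(q.2 * (1 + q.1))) with hF
  have hFmeas : Measurable F := by fun_prop
  -- inner integral in u, for fixed t > 0
  have hinner : ∀ t ∈ Ioi (0:ℝ), ∫ u in Ioi (0:ℝ), F (t, u) = t ^ (a - 1) / (1 + t) := by
    intro t ht
    have h1t : (0:ℝ) < 1 + t := by linarith [mem_Ioi.mp ht]
    simp only [hF]
    rw [MeasureTheory.integral_const_mul]
    have := Real.integral_rpow_mul_exp_neg_mul_Ioi (a := 1) (r := 1 + t) one_pos h1t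
    simp only [sub_self, Real.rpow_zero, one_mul, Real.rpow_one, Real.Gamma_one, mul_one] at this
    have h' : ∫ u in Ioi (0:ℝ), Real.exp (-(u * (1 + t))) = 1 / (1 + t) := by
      rw [← this]
      exact setIntegral_congr_fun measurableSet_Ioi (fun u _ => by rw [mul_comm])
    rw [h']
    ring
  -- integral in t, for fixed u > 0
  have houter : ∀ u ∈ Ioi (0:ℝ), ∫ t in Ioi (0:ℝ), F (t, u)
      = Real.Gamma a * ((1/u) ^ a * Real.exp (-u)) := by
    intro u hu
    have hu' : (0:ℝ) < u := mem_Ioi.mp hu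
    have heq : ∀ t : ℝ, F (t, u) = (t ^ (a - 1) * Real.exp (-(u * t))) * Real.exp (-u) := by
      intro t
      simp only [hF, mul_add, mul_one, neg_add, Real.exp_add]
      ring
    simp only [heq]
    rw [MeasureTheory.integral_mul_const, Real.integral_rpow_mul_exp_neg_mul_Ioi h0 hu']
    ring
  -- product integrability
  have hint : Integrable F (ν.prod ν) := by
    rw [MeasureTheory.integrable_prod_iff (hFmeas.aestronglyMeasurable)]
    constructor
    · filter_upwards [ae_restrict_mem measurableSet_Ioi] with t ht
      have ht' : (0:ℝ) < t := mem_Ioi.mp ht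
      have h1t : (0:ℝ) < 1 + t := by linarith
      simp only [hF]
      apply Integrable.const_mul
      have h2 := exp_neg_integrableOn_Ioi 0 h1t
      rw [hν]
      refine h2.congr_fun (fun u _ => ?_) measurableSet_Ioi
      ring_nf
    · have hbase : IntegrableOn (fun t : ℝ => t ^ (a-1) / (1+t)) (Ioi 0) := by
        apply aux_integrableOn_of_bounds (b := a - 1) (c := a - 2) (C := 1)
        · fun_prop
        · linarith
        · linarith
        · intro t ht
          have ht' : (0:ℝ) < t := ht.1
          rw [Real.norm_eq_abs, abs_of_nonneg (by positivity)]
          rw [one_mul, div_le_iff₀ (by linarith)]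
          nlinarith [Real.rpow_nonneg ht'.le (a-1)]
        · intro t ht
          have ht' : (1:ℝ) < t := mem_Ioi.mp ht
          have h0t : (0:ℝ) < t := by linarith
          rw [Real.norm_eq_abs, abs_of_nonneg (by positivity)]
          have h3 : t ^ (a-2) = t ^ (a-1) / t := by
            rw [← Real.rpow_sub_one h0t.ne']; ring_nf
          rw [h3]
          gcongr
          all_goals first | exact Real.rpow_nonneg h0t.le _ | linarith
      refine (hbase.congr_fun (fun t ht => ?_) measurableSet_Ioi)
      have ht' : (0:ℝ) < t := mem_Ioi.mp ht
      beta_reduce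
      rw [← hinner t ht]
      refine (setIntegral_congr_fun measurableSet_Ioi (fun u _ => ?_)).symm
      rw [Real.norm_eq_abs, abs_of_nonneg]
      simp only [hF]
      positivity
  -- assemble
  calc ∫ t in Ioi (0:ℝ), t ^ (a - 1) / (1 + t)
      = ∫ t in Ioi (0:ℝ), ∫ u in Ioi (0:ℝ), F (t, u) :=
        (setIntegral_congr_fun measurableSet_Ioi (fun t ht => (hinner t ht).symm))
    _ = ∫ u in Ioi (0:ℝ), ∫ t in Ioi (0:ℝ), F (t, u) :=
        MeasureTheory.integral_integral_swap (f := fun t u => F (t, u)) hint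
    _ = ∫ u in Ioi (0:ℝ), Real.Gamma a * ((1/u) ^ a * Real.exp (-u)) :=
        setIntegral_congr_fun measurableSet_Ioi (fun u hu => houter u hu)
    _ = Real.Gamma a * Real.Gamma (1 - a) := by
        rw [MeasureTheory.integral_const_mul]
        congr 1
        have h4 := Real.integral_rpow_mul_exp_neg_mul_Ioi (a := 1 - a) (r := 1) (by linarith) one_pos
        simp only [one_mul, one_div_one, Real.one_rpow] at h4
        rw [← h4]
        refine setIntegral_congr_fun measurableSet_Ioi (fun u hu => ?_)
        have hu' : (0:ℝ) < u := mem_Ioi.mp hu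
        rw [one_div, Real.inv_rpow hu'.le, ← Real.rpow_neg hu'.le]
        norm_num
lemma aux_I {p x : ℝ} (h0 : 0 < p) (h1 : p < 1) (hx : 0 < x) :
    ∫ t in Ioi (0:ℝ), t ^ (p - 1) / (t + x) = x ^ (p - 1) * (π / Real.sin (π * p)) := by
  have h := MeasureTheory.integral_comp_mul_left_Ioi
    (fun t : ℝ => t ^ (p - 1) / (t + x)) 0 hx
  rw [mul_zero] at h
  have h2 : ∫ u in Ioi (0:ℝ), (x * u) ^ (p - 1) / (x * u + x)
      = x ^ (p - 2) * (π / Real.sin (π * p)) := by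
    rw [← aux_key h0 h1, ← MeasureTheory.integral_const_mul]
    refine setIntegral_congr_fun measurableSet_Ioi (fun u hu => ?_)
    have hu' : (0:ℝ) < u := mem_Ioi.mp hu
    have hu1 : (0:ℝ) < 1 + u := by linarith
    rw [Real.mul_rpow hx.le hu'.le, show x * u + x = x * (1 + u) by ring,
      show x ^ (p-1) = x ^ (p-2) * x by rw [← Real.rpow_add_one hx.ne' (p-2)]; ring_nf]
    field_simp
  rw [h2, smul_eq_mul, eq_inv_mul_iff_mul_eq₀ hx.ne'] at h
  rw [← h, ← mul_assoc]
  congr 1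
  rw [show p - 1 = 1 + (p - 2) by ring, Real.rpow_add hx, Real.rpow_one]

lemma aux_K {p : ℝ} (h0 : 0 < p) (h1 : p < 1) :
    ∫ t in Ioi (0:ℝ), t ^ (p - 1) / (t ^ 2 + 1) = (π / Real.sin (π * (p/2))) / 2 := by
  have h := MeasureTheory.integral_comp_rpow_Ioi_of_pos
    (g := fun y : ℝ => y ^ (p/2 - 1) / (1 + y)) (p := 2) two_pos
  rw [aux_key (by linarith) (by linarith)] at h
  have h2 : ∀ t ∈ Ioi (0:ℝ), (2 * t ^ ((2:ℝ) - 1)) • ((t ^ (2:ℝ)) ^ (p/2 - 1) / (1 + t ^ (2:ℝ)))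
      = 2 * (t ^ (p - 1) / (t ^ 2 + 1)) := by
    intro t ht
    have ht' : (0:ℝ) < t := mem_Ioi.mp ht
    have e2 : ((t:ℝ) ^ (2:ℝ)) ^ (p/2 - 1) = t ^ (p - 2) := by
      rw [← Real.rpow_mul ht'.le, show (2:ℝ) * (p/2 - 1) = p - 2 by ring]
    have e1 : (t:ℝ) ^ (2:ℝ) = t ^ (2:ℕ) := by
      rw [← Real.rpow_natCast t 2]; norm_num
    have e3 : (t:ℝ) ^ ((2:ℝ) - 1) = t := by norm_num
    rw [smul_eq_mul, e3, e2, e1,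
      show p - 1 = 1 + (p - 2) by ring, Real.rpow_add ht', Real.rpow_one]
    ring
  have h' : ∫ t in Ioi (0:ℝ), 2 * (t ^ (p - 1) / (t ^ 2 + 1)) = π / Real.sin (π * (p/2)) := by
    rw [← h]
    exact setIntegral_congr_fun measurableSet_Ioi (fun t ht => (h2 t ht).symm)
  rw [MeasureTheory.integral_const_mul] at h'
  rw [eq_div_iff (two_ne_zero), mul_comm, ← h']

lemma aux_int_two {p x : ℝ} (h0 : 0 < p) (h1 : p < 1) (hx : 0 < x) :
    IntegrableOn (fun t : ℝ => t ^ (p - 1) / (t ^ 2 + 1)) (Ioi (0:ℝ)) ∧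
    IntegrableOn (fun t : ℝ => t ^ (p - 1) / (t + x)) (Ioi (0:ℝ)) := by
  constructor
  · apply aux_integrableOn_of_bounds (b := p - 1) (c := p - 3) (C := 1)
    · fun_prop
    · linarith
    · linarith
    · intro t ht
      have ht' : (0:ℝ) < t := ht.1
      rw [Real.norm_eq_abs, abs_of_nonneg (by positivity), one_mul,
        div_le_iff₀ (by positivity)]
      nlinarith [Real.rpow_nonneg ht'.le (p-1), sq_nonneg t]
    · intro t ht
      have ht' : (1:ℝ) < t := mem_Ioi.mp ht
      have h0t : (0:ℝ) < t := by linarith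
      rw [Real.norm_eq_abs, abs_of_nonneg (by positivity)]
      have h3 : t ^ (p-3) = t ^ (p-1) / t ^ (2:ℕ) := by
        rw [show p - 3 = (p-1) - (2:ℕ) by push_cast; ring, ← Real.rpow_natCast t 2,
          ← Real.rpow_sub h0t]
      rw [h3]
      gcongr
      all_goals first | exact Real.rpow_nonneg h0t.le _ | nlinarith
  · apply aux_integrableOn_of_bounds (b := p - 1) (c := p - 2) (C := x⁻¹)
    · fun_prop
    · linarith
    · linarith
    · intro t ht
      have ht' : (0:ℝ) < t := ht.1
      rw [Real.norm_eq_abs, abs_of_nonneg (by positivity),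
        div_le_iff₀ (by linarith), mul_comm x⁻¹, mul_assoc]
      refine le_mul_of_one_le_right (Real.rpow_nonneg ht'.le _) ?_
      rw [inv_mul_eq_div, le_div_iff₀ hx]
      linarith
    · intro t ht
      have ht' : (1:ℝ) < t := mem_Ioi.mp ht
      have h0t : (0:ℝ) < t := by linarith
      rw [Real.norm_eq_abs, abs_of_nonneg (by positivity)]
      have h3 : t ^ (p-2) = t ^ (p-1) / t := by
        rw [← Real.rpow_sub_one h0t.ne']; ring_nf
      rw [h3]
      gcongr
      all_goals first | exact Real.rpow_nonneg h0t.le _ | linarith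

theorem neg_rpow_integral_repr (p x : ℝ) (hp : p ∈ Set.Ioo (0 : ℝ) 1) (hx : 0 < x) :
    -x ^ p = -Real.cos (p * Real.pi / 2) +
      (Real.sin (p * Real.pi) / Real.pi) *
        ∫ t in Set.Ioi (0 : ℝ), t ^ p * (1 / (t + x) - t / (t ^ 2 + 1)) := by
  obtain ⟨h0, h1⟩ := hp
  obtain ⟨hK_int, hI_int⟩ := aux_int_two h0 h1 hx
  have hpt : ∀ t ∈ Ioi (0:ℝ), t ^ p * (1 / (t + x) - t / (t ^ 2 + 1))
      = (-x) * (t ^ (p - 1) / (t + x)) + t ^ (p - 1) / (t ^ 2 + 1) := by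
    intro t ht
    have ht' : (0:ℝ) < t := mem_Ioi.mp ht
    have htp : t ^ p = t ^ (p - 1) * t := by
      rw [← Real.rpow_add_one ht'.ne' (p-1)]; ring_nf
    have htx : (0:ℝ) < t + x := by linarith
    have ht2 : (0:ℝ) < t ^ 2 + 1 := by positivity
    rw [htp]
    field_simp
    ring
  have hint : ∫ t in Set.Ioi (0:ℝ), t ^ p * (1 / (t + x) - t / (t ^ 2 + 1))
      = (-x) * (x ^ (p - 1) * (π / Real.sin (π * p))) + (π / Real.sin (π * (p/2))) / 2 := by
    rw [setIntegral_congr_fun measurableSet_Ioi hpt,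
      MeasureTheory.integral_add ((hI_int.const_mul (-x))) hK_int,
      MeasureTheory.integral_const_mul, aux_I h0 h1 hx, aux_K h0 h1]
  rw [hint]
  have hxp : x * x ^ (p - 1) = x ^ p := by
    rw [mul_comm, ← Real.rpow_add_one hx.ne' (p-1)]
    congr 1
    ring
  have hsin2 : Real.sin (π * p) = 2 * Real.sin (π * (p/2)) * Real.cos (π * (p/2)) := by
    rw [show π * p = 2 * (π * (p/2)) by ring, Real.sin_two_mul]
  have hsinhalf : 0 < Real.sin (π * (p/2)) := by
    apply Real.sin_pos_of_pos_of_lt_pi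
    · positivity
    · nlinarith [Real.pi_pos]
  have hsinp : Real.sin (π * p) ≠ 0 := by
    have hcoshalf : 0 < Real.cos (π * (p/2)) := by
      apply Real.cos_pos_of_mem_Ioo
      constructor
      · nlinarith [Real.pi_pos]
      · nlinarith [Real.pi_pos]
    rw [hsin2]; positivity
  have hpi : (0:ℝ) < π := Real.pi_pos
  rw [show p * π / 2 = π * (p/2) by ring, show p * π = π * p by ring]
  have e : (-x) * (x ^ (p - 1) * (π / Real.sin (π * p))) = -x ^ p * (π / Real.sin (π * p)) := by
    rw [← hxp]; ring
  have t1 : Real.sin (π * p) / π * (-x ^ p * (π / Real.sin (π * p))) = -x ^ p := by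
    field_simp
  have hs2 : Real.sin (π * p / 2) ≠ 0 := by
    rw [show π * p / 2 = π * (p/2) by ring]; exact hsinhalf.ne'
  have t2 : Real.sin (π * p) / π * (π / Real.sin (π * (p/2)) / 2) = Real.cos (π * (p/2)) := by
    rw [hsin2]
    field_simp
  rw [e, mul_add, t1, t2]
  ring
end

section
/- For β ∈ (0,1) and any x > 0, the power function admits the integral representation x^β = (sin(βπ)/π) ∫₀^∞ t^β (1/t - 1/(t+x)) dt. -/
open MeasureTheory Real Set

lemma beta_val (β : ℝ) (hβ : β ∈ Set.Ioo (0 : ℝ) 1) :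
    ∫ u in Set.Ioo (0:ℝ) 1, u ^ (β - 1) * (1 - u) ^ (-β) = Real.pi / Real.sin (Real.pi * β) := by
  obtain ⟨h0, h1⟩ := hβ
  have hre : (0:ℝ) < (β:ℂ).re := by simpa using h0
  have hre2 : (0:ℝ) < ((1:ℂ) - β).re := by simpa using h1
  have hbeta : Complex.betaIntegral β (1 - β) =
      ((∫ u in (0:ℝ)..1, u ^ (β - 1) * (1 - u) ^ (-β) : ℝ) : ℂ) := by
    rw [Complex.betaIntegral, ← intervalIntegral.integral_ofReal]
    refine intervalIntegral.integral_congr fun u hu => ?_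
    rw [Set.uIcc_of_le zero_le_one] at hu
    have e1 : ((β:ℂ) - 1) = ((β - 1 : ℝ) : ℂ) := by push_cast; ring
    have e2 : ((1:ℂ) - β - 1) = ((-β : ℝ) : ℂ) := by push_cast; ring
    have e3 : ((1:ℂ) - u) = ((1 - u : ℝ) : ℂ) := by push_cast; ring
    rw [e1, e2, e3, ← Complex.ofReal_cpow hu.1, ← Complex.ofReal_cpow (by linarith [hu.2])]
    push_cast
    ring_nf
  have hG : Complex.Gamma β * Complex.Gamma (1 - β) = Complex.betaIntegral β (1 - β) := by
    have := Complex.Gamma_mul_Gamma_eq_betaIntegral hre hre2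
    rwa [add_sub_cancel, Complex.Gamma_one, one_mul] at this
  have hrefl := Complex.Gamma_mul_Gamma_one_sub (β : ℂ)
  rw [hG, hbeta] at hrefl
  have : ((∫ u in (0:ℝ)..1, u ^ (β - 1) * (1 - u) ^ (-β) : ℝ) : ℂ)
      = ((Real.pi / Real.sin (Real.pi * β) : ℝ) : ℂ) := by
    rw [hrefl]; push_cast [Complex.ofReal_sin]; ring_nf
  have h2 := Complex.ofReal_injective this
  rw [← h2, intervalIntegral.integral_of_le zero_le_one, integral_Ioc_eq_integral_Ioo]

lemma subst_lemma (β : ℝ) (hβ : β ∈ Set.Ioo (0 : ℝ) 1) :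
    ∫ s in Set.Ioi (0:ℝ), s ^ (β - 1) * (1 + s)⁻¹
      = ∫ u in Set.Ioo (0:ℝ) 1, u ^ (β - 1) * (1 - u) ^ (-β) := by
  obtain ⟨h0, h1⟩ := hβ
  have himg : (fun u : ℝ => u / (1 - u)) '' Set.Ioo 0 1 = Set.Ioi 0 := by
    ext y
    simp only [Set.mem_image, Set.mem_Ioo, Set.mem_Ioi]
    constructor
    · rintro ⟨u, ⟨hu0, hu1⟩, rfl⟩
      exact div_pos hu0 (by linarith)
    · intro hy
      have h1y : (0:ℝ) < 1 + y := by linarith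
      refine ⟨y / (1 + y), ⟨div_pos hy h1y, ?_⟩, ?_⟩
      · rw [div_lt_one h1y]; linarith
      · field_simp; ring
  have hderiv : ∀ u ∈ Set.Ioo (0:ℝ) 1,
      HasDerivWithinAt (fun u : ℝ => u / (1 - u)) (((1 - u) ^ 2)⁻¹) (Set.Ioo 0 1) u := by
    intro u hu
    have hne : (1:ℝ) - u ≠ 0 := by simp only [Set.mem_Ioo] at hu; intro h; linarith [hu.2]
    have := (hasDerivAt_id u).div ((hasDerivAt_const u (1:ℝ)).sub (hasDerivAt_id u)) hne
    refine HasDerivWithinAt.congr_deriv this.hasDerivWithinAt ?_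
    simp only [Pi.sub_apply, id_eq]; ring
  have hinj : Set.InjOn (fun u : ℝ => u / (1 - u)) (Set.Ioo 0 1) := by
    intro a ha b hb hab
    simp only [Set.mem_Ioo] at ha hb
    have hA : (1:ℝ) - a ≠ 0 := by intro h; linarith [ha.2]
    have hB : (1:ℝ) - b ≠ 0 := by intro h; linarith [hb.2]
    field_simp at hab
    linarith
  rw [← himg, integral_image_eq_integral_abs_deriv_smul measurableSet_Ioo hderiv hinj]
  refine setIntegral_congr_fun measurableSet_Ioo fun u hu => ?_
  simp only [Set.mem_Ioo] at hu
  obtain ⟨hu0, hu1⟩ := hu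
  have h1u : (0:ℝ) < 1 - u := by linarith
  have key : (1:ℝ) + u / (1 - u) = (1 - u)⁻¹ := by field_simp; ring
  have hsq : ((1 - u:ℝ)^2)⁻¹ = (1 - u) ^ (-2:ℝ) := by
    rw [← Real.rpow_natCast (1-u) 2, ← Real.rpow_neg h1u.le]; norm_num
  rw [smul_eq_mul, abs_of_pos (by positivity), key, inv_inv,
    div_rpow hu0.le h1u.le, div_eq_mul_inv, ← Real.rpow_neg h1u.le, hsq]
  calc (1-u) ^ (-2:ℝ) * (u ^ (β-1) * (1-u) ^ (-(β-1)) * (1-u))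
      = u ^ (β-1) * ((1-u) ^ (-2:ℝ) * (1-u) ^ (-(β-1)) * (1-u) ^ (1:ℝ)) := by
        rw [Real.rpow_one]; ring
    _ = u ^ (β-1) * (1-u) ^ (-β) := by
        rw [← Real.rpow_add h1u, ← Real.rpow_add h1u]
        congr 1
        ring

theorem rpow_integral_repr (β x : ℝ) (hβ : β ∈ Set.Ioo (0 : ℝ) 1) (hx : 0 < x) :
    x ^ β = (Real.sin (β * Real.pi) / Real.pi) *
      ∫ t in Set.Ioi (0 : ℝ), t ^ β * (1 / t - 1 / (t + x)) := by
  obtain ⟨h0, h1⟩ := hβ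
  have hI : ∫ s in Set.Ioi (0:ℝ), s ^ (β - 1) * (1 + s)⁻¹ = Real.pi / Real.sin (Real.pi * β) :=
    (subst_lemma β ⟨h0, h1⟩).trans (beta_val β ⟨h0, h1⟩)
  have step1 : ∫ t in Set.Ioi (0:ℝ), t ^ β * (1 / t - 1 / (t + x))
      = ∫ t in Set.Ioi (0:ℝ), x * (t ^ (β - 1) * (t + x)⁻¹) := by
    refine setIntegral_congr_fun measurableSet_Ioi fun t ht => ?_
    have ht0 : (0:ℝ) < t := ht
    have htx : (0:ℝ) < t + x := by linarith
    rw [Real.rpow_sub ht0, Real.rpow_one]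
    field_simp
    ring
  have step2 : ∫ t in Set.Ioi (0:ℝ), t ^ (β - 1) * (t + x)⁻¹
      = x ^ (β - 1) * ∫ s in Set.Ioi (0:ℝ), s ^ (β - 1) * (1 + s)⁻¹ := by
    have := integral_comp_mul_left_Ioi (fun t => t ^ (β - 1) * (t + x)⁻¹) 0 hx
    rw [mul_zero] at this
    have hcongr : ∫ s in Set.Ioi (0:ℝ), (x * s) ^ (β - 1) * (x * s + x)⁻¹
        = ∫ s in Set.Ioi (0:ℝ), x ^ (β - 2) * (s ^ (β - 1) * (1 + s)⁻¹) := by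
      refine setIntegral_congr_fun measurableSet_Ioi fun s hs => ?_
      have hs0 : (0:ℝ) < s := hs
      have h1s : (0:ℝ) < 1 + s := by linarith
      rw [Real.mul_rpow hx.le hs0.le, show x * s + x = x * (1 + s) by ring,
        mul_inv, show (β - 2 : ℝ) = (β - 1) + (-1) by ring,
        Real.rpow_add hx, Real.rpow_neg_one]
      ring
    rw [hcongr, integral_const_mul, smul_eq_mul] at this
    have hx2 : x ^ (β - 2 : ℝ) = x⁻¹ * x ^ (β - 1 : ℝ) := by
      rw [show (β - 2 : ℝ) = (-1) + (β - 1) by ring, Real.rpow_add hx, Real.rpow_neg_one]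
    rw [hx2] at this
    have hxne : x ≠ 0 := hx.ne'
    field_simp at this ⊢
    linarith [this]
  have hsin : Real.sin (Real.pi * β) ≠ 0 := by
    have := Real.sin_pos_of_pos_of_lt_pi (x := Real.pi * β) (by positivity)
      (by nlinarith [Real.pi_pos])
    exact this.ne'
  rw [step1, integral_const_mul, step2, hI]
  have hxp : x * x ^ (β - 1) = x ^ β := by
    have h := Real.rpow_add hx 1 (β - 1)
    rw [Real.rpow_one] at h
    rw [← h]; norm_num
  rw [show x * (x ^ (β-1) * (Real.pi / Real.sin (Real.pi * β)))
      = (x * x ^ (β-1)) * (Real.pi / Real.sin (Real.pi * β)) by ring, hxp,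
    mul_comm β Real.pi]
  field_simp
end

section
/- Let f : (0,∞) → ℝ be convex with f(1) = 0 and strictly convex at 1. If p and q are probability distributions with S_f(p||q) = Σ_j p_j f(q_j/p_j) = 0, then p = q. -/
/-- If `f` is convex on `(0,∞)` with `f(1)=0` and strictly convex at `1`, then vanishing of
the classical f-divergence `Σ_j p_j f(q_j/p_j) = 0` forces `p = q`. -/
theorem classical_fDivergence_eq_zero {ι : Type*} [Fintype ι]
    (f : ℝ → ℝ) (hf : ConvexOn ℝ (Set.Ioi (0 : ℝ)) f) (hf1 : f 1 = 0)
    (hstrict : ∀ x y : ℝ, 0 < x → 0 < y → x ≠ y → (x + y) / 2 = 1 →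
      f ((x + y) / 2) < (f x + f y) / 2)
    (p q : ι → ℝ) (hp : ∀ j, 0 < p j) (hq : ∀ j, 0 < q j)
    (hps : ∑ j, p j = 1) (hqs : ∑ j, q j = 1)
    (hzero : ∑ j, p j * f (q j / p j) = 0) :
    p = q := by
  classical
  set x : ι → ℝ := fun j => q j / p j with hxdef
  have hxpos : ∀ j, 0 < x j := fun j => div_pos (hq j) (hp j)
  have hxmem : ∀ j, x j ∈ Set.Ioi (0:ℝ) := fun j => hxpos j
  have h1mem : (1:ℝ) ∈ Set.Ioi (0:ℝ) := by norm_num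
  have hpx : ∀ j, p j * x j = q j := fun j => by
    rw [hxdef]; exact mul_div_cancel₀ (q j) (hp j).ne'
  have hsum1 : ∑ j, p j * x j = 1 := by simp_rw [hpx]; exact hqs
  have hzero' : ∑ j, p j * f (x j) = 0 := hzero
  by_cases hall : ∀ j, x j = 1
  · funext j
    have h := hall j
    have hpj := (hp j).ne'
    field_simp [hxdef] at h
    have h2 := hpx j; rw [h, mul_one] at h2; linarith
  push_neg at hall
  obtain ⟨k, hk⟩ := hall
  exfalso
  -- there is an index below 1 and one above 1
  have hbelow : ∃ j, x j < 1 := by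
    by_contra h
    push_neg at h
    have hk' : 1 < x k := lt_of_le_of_ne (h k) (Ne.symm hk)
    have hlt : (1:ℝ) < 1 := by
      calc (1:ℝ) = ∑ j, p j := hps.symm
        _ < ∑ j, p j * x j := by
            refine Finset.sum_lt_sum (fun j _ => ?_) ⟨k, Finset.mem_univ k, ?_⟩
            · nlinarith [hp j, h j]
            · nlinarith [hp k]
        _ = 1 := hsum1
    exact absurd hlt (lt_irrefl 1)
  have habove : ∃ j, 1 < x j := by
    by_contra h
    push_neg at h
    obtain ⟨j₀, hj₀⟩ := hbelow
    have hlt : (1:ℝ) < 1 := by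
      calc (1:ℝ) = ∑ j, p j * x j := hsum1.symm
        _ < ∑ j, p j := by
            refine Finset.sum_lt_sum (fun j _ => ?_) ⟨j₀, Finset.mem_univ j₀, ?_⟩
            · nlinarith [hp j, h j]
            · nlinarith [hp j₀]
        _ = 1 := hps
    exact absurd hlt (lt_irrefl 1)
  -- `a` := the maximal x-value strictly below 1
  obtain ⟨a, ha0, ha1, hamax⟩ :
      ∃ a : ℝ, 0 < a ∧ a < 1 ∧ ∀ j, x j < 1 → x j ≤ a := by
    obtain ⟨ja, hjamem, hjamax⟩ := Finset.exists_max_image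
      (Finset.univ.filter fun j => x j < 1) x (by
        obtain ⟨j₀, hj₀⟩ := hbelow
        exact ⟨j₀, Finset.mem_filter.2 ⟨Finset.mem_univ _, hj₀⟩⟩)
    exact ⟨x ja, hxpos ja, (Finset.mem_filter.1 hjamem).2,
      fun j hj => hjamax j (Finset.mem_filter.2 ⟨Finset.mem_univ _, hj⟩)⟩
  have hamem : a ∈ Set.Ioi (0:ℝ) := ha0
  have hane : a - 1 ≠ 0 := sub_ne_zero.2 (ne_of_lt ha1)
  obtain ⟨c, hfa⟩ : ∃ c : ℝ, f a = c * (a - 1) :=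
    ⟨f a / (a - 1), (div_mul_cancel₀ (f a) hane).symm⟩
  have hca : f a / (a - 1) = c := by rw [hfa, mul_div_cancel_right₀ _ hane]
  -- termwise support-line inequality
  have hkey : ∀ j, c * (x j - 1) ≤ f (x j) := by
    intro j
    rcases lt_trichotomy (x j) 1 with hlt | heq | hgt
    · have hle : x j ≤ a := hamax j hlt
      have hs := hf.secant_mono h1mem (hxmem j) hamem
        (ne_of_lt hlt) (ne_of_lt ha1) hle
      rw [hf1, sub_zero, sub_zero, hca] at hs
      exact (div_le_iff_of_neg (by linarith : x j - 1 < 0)).1 hs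
    · rw [heq]; simp [hf1]
    · have hs := hf.secant_mono h1mem hamem (hxmem j)
        (ne_of_lt ha1) (ne_of_gt hgt) (by linarith)
      rw [hf1, sub_zero, sub_zero, hca] at hs
      exact (le_div_iff₀ (by linarith : (0:ℝ) < x j - 1)).1 hs
  -- the slack terms are nonnegative and sum to zero, hence each is zero
  have hsum0 : ∑ j, p j * (f (x j) - c * (x j - 1)) = 0 := by
    have he : ∀ j ∈ Finset.univ,
        p j * (f (x j) - c * (x j - 1)) = p j * f (x j) - c * (p j * x j) + c * p j :=
      fun j _ => by ring
    rw [Finset.sum_congr rfl he, Finset.sum_add_distrib, Finset.sum_sub_distrib,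
      ← Finset.mul_sum, ← Finset.mul_sum, hsum1, hps, hzero']
    ring
  have heach : ∀ j, p j * (f (x j) - c * (x j - 1)) = 0 := by
    have h := (Finset.sum_eq_zero_iff_of_nonneg
      (fun j _ => mul_nonneg (hp j).le (by linarith [hkey j]))).1 hsum0
    intro j; exact h j (Finset.mem_univ j)
  -- pick b above 1 with f b on the line
  obtain ⟨b, hb1, hbmem, hfb⟩ : ∃ b : ℝ, 1 < b ∧ b ∈ Set.Ioi (0:ℝ) ∧ f b = c * (b - 1) := by
    obtain ⟨jb, hjb⟩ := habove
    refine ⟨x jb, hjb, hxmem jb, ?_⟩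
    have h := heach jb
    rcases mul_eq_zero.1 h with h' | h'
    · exact absurd h' (hp jb).ne'
    · linarith [h']
  have hbne : b - 1 ≠ 0 := sub_ne_zero.2 (ne_of_gt hb1)
  -- build a symmetric pair around 1
  obtain ⟨ε, hε0, hεa, hεb⟩ : ∃ ε : ℝ, 0 < ε ∧ ε < 1 - a ∧ ε < b - 1 := by
    refine ⟨min (1 - a) (b - 1) / 2, ?_, ?_, ?_⟩
    · have := lt_min (by linarith : (0:ℝ) < 1 - a) (by linarith : (0:ℝ) < b - 1)
      positivity
    · have := min_le_left (1 - a) (b - 1)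
      have := lt_min (by linarith : (0:ℝ) < 1 - a) (by linarith : (0:ℝ) < b - 1)
      linarith
    · have := min_le_right (1 - a) (b - 1)
      have := lt_min (by linarith : (0:ℝ) < 1 - a) (by linarith : (0:ℝ) < b - 1)
      linarith
  have hane' : (1:ℝ) - a ≠ 0 := by intro h; apply hane; linarith
  -- f (1-ε) ≤ -c * ε by convexity on [a, 1]
  have hfu : f (1 - ε) ≤ c * (-ε) := by
    have hθ0 : (0:ℝ) ≤ ε / (1 - a) := div_nonneg hε0.le (by linarith)
    have hθ1 : (0:ℝ) ≤ 1 - ε / (1 - a) := by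
      rw [sub_nonneg, div_le_one (by linarith)]; linarith
    have hcomb := hf.2 hamem h1mem hθ0 hθ1 (by ring)
    have hval : (ε / (1 - a)) • a + (1 - ε / (1 - a)) • (1:ℝ) = 1 - ε := by
      rw [smul_eq_mul, smul_eq_mul]
      field_simp
      ring
    rw [hval, smul_eq_mul, smul_eq_mul, hf1, hfa] at hcomb
    calc f (1 - ε) ≤ ε / (1 - a) * (c * (a - 1)) + (1 - ε / (1 - a)) * 0 := hcomb
      _ = c * (-ε) := by field_simp; ring
  -- f (1+ε) ≤ c * ε by convexity on [1, b]
  have hfv : f (1 + ε) ≤ c * ε := by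
    have hθ0 : (0:ℝ) ≤ ε / (b - 1) := div_nonneg hε0.le (by linarith)
    have hθ1 : (0:ℝ) ≤ 1 - ε / (b - 1) := by
      rw [sub_nonneg, div_le_one (by linarith)]; linarith
    have hcomb := hf.2 hbmem h1mem hθ0 hθ1 (by ring)
    have hval : (ε / (b - 1)) • b + (1 - ε / (b - 1)) • (1:ℝ) = 1 + ε := by
      rw [smul_eq_mul, smul_eq_mul]
      field_simp
      ring
    rw [hval, smul_eq_mul, smul_eq_mul, hf1, hfb] at hcomb
    calc f (1 + ε) ≤ ε / (b - 1) * (c * (b - 1)) + (1 - ε / (b - 1)) * 0 := hcomb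
      _ = c * ε := by field_simp; ring
  -- contradiction with strict convexity at 1
  have hmid : ((1 - ε) + (1 + ε)) / 2 = 1 := by ring
  have hlt := hstrict (1 - ε) (1 + ε) (by linarith) (by linarith)
    (by intro h; linarith) hmid
  rw [hmid, hf1] at hlt
  linarith
end

section
/- Let U be a partial isometry from a Hilbert space K into a Hilbert space H (U*U = I on K), B an invertible positive operator on K, A an invertible positive operator on H with U*AU = B. Then for all v ∈ K, ⟨v, U*A⁻¹Uv⟩ = ⟨v, B⁻¹v⟩ + ⟨w, Aw⟩, where w = UB⁻¹v − A⁻¹Uv. -/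
open scoped InnerProductSpace

/-- Lemma 2.1 of Carlen–Vershynina: if `U : K → H` is an isometry, `A` a positive definite
invertible operator on `H`, `B` a positive definite invertible operator on `K`, with
`U*AU = B`, then `⟨v, U*A⁻¹Uv⟩ = ⟨v, B⁻¹v⟩ + ⟨w, Aw⟩` where `w = UB⁻¹v − A⁻¹Uv`. -/
theorem resolvent_identity
    {H K : Type*} [NormedAddCommGroup H] [InnerProductSpace ℂ H] [FiniteDimensional ℂ H]
    [NormedAddCommGroup K] [InnerProductSpace ℂ K] [FiniteDimensional ℂ K]
    (U : K →ₗ[ℂ] H) (hU : ∀ v w : K, ⟪U v, U w⟫_ℂ = ⟪v, w⟫_ℂ)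
    (A Ainv : H →ₗ[ℂ] H) (B Binv : K →ₗ[ℂ] K)
    (hA : A.IsSymmetric) (hApos : ∀ v : H, v ≠ 0 → 0 < (⟪v, A v⟫_ℂ).re)
    (hB : B.IsSymmetric) (hBpos : ∀ v : K, v ≠ 0 → 0 < (⟪v, B v⟫_ℂ).re)
    (hAinv : A.comp Ainv = LinearMap.id ∧ Ainv.comp A = LinearMap.id)
    (hBinv : B.comp Binv = LinearMap.id ∧ Binv.comp B = LinearMap.id)
    (hUAU : (LinearMap.adjoint U).comp (A.comp U) = B)
    (v : K) :
    ⟪v, (LinearMap.adjoint U) (Ainv (U v))⟫_ℂ =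
      ⟪v, Binv v⟫_ℂ + ⟪U (Binv v) - Ainv (U v), A (U (Binv v) - Ainv (U v))⟫_ℂ := by
  have hAA : ∀ x : H, A (Ainv x) = x := fun x => by
    have := congrArg (fun f : H →ₗ[ℂ] H => f x) hAinv.1
    simpa using this
  have hBB : ∀ x : K, B (Binv x) = x := fun x => by
    have := congrArg (fun f : K →ₗ[ℂ] K => f x) hBinv.1
    simpa using this
  have hUAUx : ∀ x : K, (LinearMap.adjoint U) (A (U x)) = B x := fun x => by
    have := congrArg (fun f : K →ₗ[ℂ] K => f x) hUAU
    simpa using this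
  have h1 : ⟪U (Binv v), A (U (Binv v))⟫_ℂ = ⟪Binv v, v⟫_ℂ := by
    rw [← LinearMap.adjoint_inner_right, hUAUx, hBB]
  have h2 : ⟪U (Binv v), A (Ainv (U v))⟫_ℂ = ⟪Binv v, v⟫_ℂ := by
    rw [hAA, hU]
  have h3 : ⟪Ainv (U v), A (U (Binv v))⟫_ℂ = ⟪v, Binv v⟫_ℂ := by
    rw [← hA, hAA, hU]
  have h4 : ⟪Ainv (U v), A (Ainv (U v))⟫_ℂ =
      ⟪v, (LinearMap.adjoint U) (Ainv (U v))⟫_ℂ := by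
    rw [← hA, hAA, LinearMap.adjoint_inner_right]
  simp only [map_sub, inner_sub_left, inner_sub_right, h1, h2, h3, h4]
  ring
end

section
/- With the notation of the previous lemma (U isometry, U*AU = B, A,B positive definite), for all v ∈ K one has ⟨v, U*A⁻¹Uv⟩ ≥ ⟨v, B⁻¹v⟩, i.e. the resolvent difference is nonnegative. -/
open scoped InnerProductSpace

/-- With `U` an isometry, `A`, `B` positive definite and `U*AU = B`, one has
`⟨v, U*A⁻¹Uv⟩ ≥ ⟨v, B⁻¹v⟩` for all `v`. -/
theorem resolvent_inequality
    {H K : Type*} [NormedAddCommGroup H] [InnerProductSpace ℂ H] [FiniteDimensional ℂ H]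
    [NormedAddCommGroup K] [InnerProductSpace ℂ K] [FiniteDimensional ℂ K]
    (U : K →ₗ[ℂ] H) (hU : ∀ v w : K, ⟪U v, U w⟫_ℂ = ⟪v, w⟫_ℂ)
    (A Ainv : H →ₗ[ℂ] H) (B Binv : K →ₗ[ℂ] K)
    (hA : A.IsSymmetric) (hApos : ∀ v : H, v ≠ 0 → 0 < (⟪v, A v⟫_ℂ).re)
    (hB : B.IsSymmetric) (hBpos : ∀ v : K, v ≠ 0 → 0 < (⟪v, B v⟫_ℂ).re)
    (hAinv : A.comp Ainv = LinearMap.id ∧ Ainv.comp A = LinearMap.id)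
    (hBinv : B.comp Binv = LinearMap.id ∧ Binv.comp B = LinearMap.id)
    (hUAU : (LinearMap.adjoint U).comp (A.comp U) = B)
    (v : K) :
    (⟪v, Binv v⟫_ℂ).re ≤ (⟪v, (LinearMap.adjoint U) (Ainv (U v))⟫_ℂ).re := by
  set x := Ainv (U v) with hx
  set w := Binv v with hw
  have hAx : A x = U v := LinearMap.congr_fun hAinv.1 (U v)
  have hBw : B w = v := LinearMap.congr_fun hBinv.1 v
  have hUAUapp : ∀ u : K, (LinearMap.adjoint U) (A (U u)) = B u := fun u =>
    LinearMap.congr_fun hUAU u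
  set z := x - U w with hz
  have hpos : 0 ≤ (⟪z, A z⟫_ℂ).re := by
    rcases eq_or_ne z 0 with h | h
    · simp [h]
    · exact le_of_lt (hApos z h)
  -- expand
  have expand : ⟪z, A z⟫_ℂ =
      ⟪x, A x⟫_ℂ - ⟪x, A (U w)⟫_ℂ - ⟪U w, A x⟫_ℂ + ⟪U w, A (U w)⟫_ℂ := by
    simp only [hz, map_sub, inner_sub_left, inner_sub_right]
    ring
  have h1 : (⟪x, A x⟫_ℂ).re = (⟪U v, Ainv (U v)⟫_ℂ).re := by
    rw [hAx, ← hx]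
    exact inner_re_symm (𝕜 := ℂ) x (U v)
  have h2 : ⟪x, A (U w)⟫_ℂ = ⟪v, w⟫_ℂ := by
    rw [← hA x (U w), hAx, hU]
  have h3 : ⟪U w, A x⟫_ℂ = ⟪w, v⟫_ℂ := by
    rw [hAx, hU]
  have h4 : ⟪U w, A (U w)⟫_ℂ = ⟪w, v⟫_ℂ := by
    rw [show ⟪U w, A (U w)⟫_ℂ = ⟪w, (LinearMap.adjoint U) (A (U w))⟫_ℂ by
      rw [LinearMap.adjoint_inner_right], hUAUapp, hBw]
  have hadj : ⟪v, (LinearMap.adjoint U) (Ainv (U v))⟫_ℂ = ⟪U v, Ainv (U v)⟫_ℂ := by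
    rw [LinearMap.adjoint_inner_right]
  have hre : (⟪w, v⟫_ℂ).re = (⟪v, w⟫_ℂ).re := by
    exact inner_re_symm (𝕜 := ℂ) w v
  rw [expand] at hpos
  simp only [Complex.add_re, Complex.sub_re, h1, h2, h3, h4, hre] at hpos
  rw [hadj]
  rw [hw] at hpos
  linarith
end

section
/- Let ρ be an invertible density matrix on H₁⊗H₂ with partial trace ρ₁ = Tr₂ρ (also invertible), and V a unitary on H₂. Define U(X₁) = (X₁⊗V) ρ₁^{-1/2} ρ^{1/2} for X₁ an operator on H₁, regarded as a map into operators on H₁⊗H₂ with the Hilbert–Schmidt inner product. Then U is an isometry: ⟨U(X₁), U(Y₁)⟩_HS = ⟨X₁, Y₁⟩_HS for all X₁, Y₁. -/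
open Matrix
open scoped Kronecker ComplexOrder

/-- Partial trace over the second tensor factor. -/
noncomputable def ptrace2 {ι₁ ι₂ : Type*} [Fintype ι₁] [Fintype ι₂]
    (ρ : Matrix (ι₁ × ι₂) (ι₁ × ι₂) ℂ) : Matrix ι₁ ι₁ ℂ :=
  Matrix.of fun i j => ∑ k, ρ (i, k) (j, k)

lemma kron_conjTranspose {ι₁ ι₂ : Type*} (A : Matrix ι₁ ι₁ ℂ) (B : Matrix ι₂ ι₂ ℂ) :
    (A ⊗ₖ B)ᴴ = Aᴴ ⊗ₖ Bᴴ := by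
  ext ⟨i, k⟩ ⟨j, l⟩
  simp [conjTranspose_apply]

lemma trace_kron_one_mul {ι₁ ι₂ : Type*} [Fintype ι₁] [Fintype ι₂] [DecidableEq ι₂]
    (A : Matrix ι₁ ι₁ ℂ) (M : Matrix (ι₁ × ι₂) (ι₁ × ι₂) ℂ) :
    ((A ⊗ₖ (1 : Matrix ι₂ ι₂ ℂ)) * M).trace = (A * ptrace2 M).trace := by
  simp only [trace, diag_apply, mul_apply, Fintype.sum_prod_type, kroneckerMap_apply,
    ptrace2, Matrix.of_apply, one_apply, mul_ite, mul_one, mul_zero, ite_mul, zero_mul,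
    Finset.sum_ite_eq, Finset.mem_univ, if_true, Finset.mul_sum]
  exact Finset.sum_congr rfl fun i _ => Finset.sum_comm ..

/-- The map `U(X₁) = (X₁⊗V) ρ₁^{-1/2} ρ^{1/2}` is an isometry for the Hilbert–Schmidt
inner product `⟨A,B⟩ = Tr(A*B)`. Here `sqrtρ = ρ^{1/2}` and `s₁ = ρ₁^{-1/2}` (acting as
`ρ₁^{-1/2} ⊗ I`), where `ρ₁ = Tr₂ ρ`. -/
theorem sharma_map_isometry {ι₁ ι₂ : Type*} [Fintype ι₁] [Fintype ι₂]
    [DecidableEq ι₁] [DecidableEq ι₂]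
    (ρ : Matrix (ι₁ × ι₂) (ι₁ × ι₂) ℂ) (hρherm : ρ.IsHermitian) (hρpos : ρ.PosDef)
    (hρtr : ρ.trace = 1)
    (V : Matrix ι₂ ι₂ ℂ) (hV : V ∈ Matrix.unitaryGroup ι₂ ℂ)
    (sqrtρ : Matrix (ι₁ × ι₂) (ι₁ × ι₂) ℂ) (hsq : sqrtρ.IsHermitian)
    (hsqrt : sqrtρ * sqrtρ = ρ)
    (s₁ : Matrix ι₁ ι₁ ℂ) (hs₁herm : s₁.IsHermitian)
    (hs₁ : s₁ * s₁ * ptrace2 ρ = 1) (hs₁' : ptrace2 ρ * (s₁ * s₁) = 1)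
    (X Y : Matrix ι₁ ι₁ ℂ) :
    (((X ⊗ₖ V) * (s₁ ⊗ₖ (1 : Matrix ι₂ ι₂ ℂ)) * sqrtρ)ᴴ *
        ((Y ⊗ₖ V) * (s₁ ⊗ₖ (1 : Matrix ι₂ ι₂ ℂ)) * sqrtρ)).trace =
      (Xᴴ * Y).trace := by
  have hVu : Vᴴ * V = 1 := mem_unitaryGroup_iff'.mp hV
  have hC : ((X ⊗ₖ V) * (s₁ ⊗ₖ (1 : Matrix ι₂ ι₂ ℂ)) * sqrtρ)ᴴ
      = sqrtρ * ((s₁ * Xᴴ) ⊗ₖ Vᴴ) := by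
    rw [conjTranspose_mul, conjTranspose_mul, kron_conjTranspose, kron_conjTranspose,
      hsq.eq, hs₁herm.eq, conjTranspose_one, ← mul_kronecker_mul,
      Matrix.one_mul]
  have hD : (Y ⊗ₖ V) * (s₁ ⊗ₖ (1 : Matrix ι₂ ι₂ ℂ)) * sqrtρ
      = ((Y * s₁) ⊗ₖ V) * sqrtρ := by
    rw [← mul_kronecker_mul, Matrix.mul_one]
  rw [hC, hD, Matrix.mul_assoc, ← Matrix.mul_assoc ((s₁ * Xᴴ) ⊗ₖ Vᴴ),
    ← mul_kronecker_mul, hVu, trace_mul_comm, Matrix.mul_assoc, hsqrt,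
    trace_kron_one_mul]
  have hfin : s₁ * (ptrace2 ρ * s₁) = 1 := by
    have h1 : (ptrace2 ρ * s₁) * s₁ = 1 := by rw [Matrix.mul_assoc]; exact hs₁'
    exact mul_eq_one_comm.mp h1
  simp only [Matrix.mul_assoc]
  rw [trace_mul_comm]
  simp only [Matrix.mul_assoc]
  rw [hfin, Matrix.mul_one]
end

section
/- With U(X₁) = (X₁⊗V)ρ₁^{-1/2}ρ^{1/2} as above (V unitary, ρ, σ invertible density matrices on H₁⊗H₂), one has U* Δ_{σ,ρ} U (X₁) = Δ_{σ₁,ρ₁}(X₁) for all operators X₁ on H₁, where Δ_{σ,ρ}(X) = σXρ^{-1} and σ₁ = Tr₂σ, ρ₁ = Tr₂ρ. -/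
open Matrix
open scoped Kronecker ComplexOrder

lemma kron_conjT {ι₁ ι₂ : Type*} [Fintype ι₁] [Fintype ι₂]
    (A : Matrix ι₁ ι₁ ℂ) (B : Matrix ι₂ ι₂ ℂ) :
    (A ⊗ₖ B)ᴴ = Aᴴ ⊗ₖ Bᴴ := by
  ext ⟨i,k⟩ ⟨j,l⟩
  simp [conjTranspose_apply, mul_comm]

lemma trace_mul_kron_one {ι₁ ι₂ : Type*} [Fintype ι₁] [Fintype ι₂] [DecidableEq ι₂]
    (σ : Matrix (ι₁ × ι₂) (ι₁ × ι₂) ℂ) (A : Matrix ι₁ ι₁ ℂ) :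
    (σ * (A ⊗ₖ (1 : Matrix ι₂ ι₂ ℂ))).trace = (ptrace2 σ * A).trace := by
  simp only [Matrix.trace, Matrix.diag, Matrix.mul_apply, ptrace2, Matrix.kroneckerMap_apply,
    Matrix.one_apply, Matrix.of_apply, Fintype.sum_prod_type, mul_ite, mul_one, mul_zero,
    Finset.sum_ite_eq', Finset.mem_univ, if_true, Finset.sum_mul]
  exact Finset.sum_congr rfl fun i _ => Finset.sum_comm ..

/-- With `U(X₁) = (X₁⊗V) ρ₁^{-1/2} ρ^{1/2}`, one has `U* Δ_{σ,ρ} U = Δ_{σ₁,ρ₁}`, expressed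
via the Hilbert–Schmidt inner products: `⟨U Y₁, Δ_{σ,ρ}(U X₁)⟩ = ⟨Y₁, Δ_{σ₁,ρ₁}(X₁)⟩` for
all `X₁, Y₁` (which, since `⟨Y₁, U*Z⟩ = ⟨U Y₁, Z⟩`, is the operator identity).  Here
`Δ_{σ,ρ}(X) = σ X ρ⁻¹`, `ρ₁ = Tr₂ ρ`, `σ₁ = Tr₂ σ`. -/
theorem sharma_map_modular {ι₁ ι₂ : Type*} [Fintype ι₁] [Fintype ι₂]
    [DecidableEq ι₁] [DecidableEq ι₂]
    (ρ σ : Matrix (ι₁ × ι₂) (ι₁ × ι₂) ℂ) (hρpos : ρ.PosDef) (hσpos : σ.PosDef)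
    (hρtr : ρ.trace = 1) (hσtr : σ.trace = 1)
    (V : Matrix ι₂ ι₂ ℂ) (hV : V ∈ Matrix.unitaryGroup ι₂ ℂ)
    (sqrtρ : Matrix (ι₁ × ι₂) (ι₁ × ι₂) ℂ) (hsq : sqrtρ.IsHermitian)
    (hsqrt : sqrtρ * sqrtρ = ρ)
    (s₁ : Matrix ι₁ ι₁ ℂ) (hs₁herm : s₁.IsHermitian)
    (hs₁ : s₁ * s₁ * ptrace2 ρ = 1) (hs₁' : ptrace2 ρ * (s₁ * s₁) = 1)
    (U : Matrix ι₁ ι₁ ℂ → Matrix (ι₁ × ι₂) (ι₁ × ι₂) ℂ)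
    (hU : ∀ X, U X = (X ⊗ₖ V) * (s₁ ⊗ₖ (1 : Matrix ι₂ ι₂ ℂ)) * sqrtρ)
    (X Y : Matrix ι₁ ι₁ ℂ) :
    ((U Y)ᴴ * (σ * U X * ρ⁻¹)).trace =
      (Yᴴ * (ptrace2 σ * X * (ptrace2 ρ)⁻¹)).trace := by
  have hVV : V * Vᴴ = 1 := by
    simpa [Matrix.star_eq_conjTranspose] using Matrix.mem_unitaryGroup_iff.mp hV
  have hdet : ρ.det ≠ 0 := hρpos.det_pos.ne'
  have hsdet : IsUnit sqrtρ.det := isUnit_iff_ne_zero.mpr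
    (fun h => hdet (by rw [← hsqrt, Matrix.det_mul, h, mul_zero]))
  have hkey : sqrtρ * ρ⁻¹ * sqrtρ = 1 := by
    rw [← hsqrt, Matrix.mul_inv_rev, ← mul_assoc,
      Matrix.mul_nonsing_inv _ hsdet, one_mul, Matrix.nonsing_inv_mul _ hsdet]
  have hρ₁inv : (ptrace2 ρ)⁻¹ = s₁ * s₁ := Matrix.inv_eq_left_inv hs₁
  rw [hU, hU, Matrix.conjTranspose_mul, Matrix.conjTranspose_mul, hsq.eq,
      kron_conjT, kron_conjT, hs₁herm.eq, Matrix.conjTranspose_one, hρ₁inv]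
  simp only [← mul_assoc]
  rw [Matrix.trace_mul_comm _ (ρ⁻¹)]
  simp only [← mul_assoc]
  rw [Matrix.trace_mul_comm _ sqrtρ]
  simp only [← mul_assoc]
  rw [hkey, one_mul]
  rw [Matrix.trace_mul_comm _ (s₁ ⊗ₖ (1 : Matrix ι₂ ι₂ ℂ))]
  simp only [← mul_assoc]
  rw [Matrix.trace_mul_comm _ (X ⊗ₖ V)]
  simp only [← mul_assoc]
  rw [Matrix.trace_mul_comm _ σ]
  simp only [← mul_assoc]
  have hk : (X ⊗ₖ V) * (s₁ ⊗ₖ (1 : Matrix ι₂ ι₂ ℂ)) * (s₁ ⊗ₖ (1 : Matrix ι₂ ι₂ ℂ)) * (Yᴴ ⊗ₖ Vᴴ)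
      = (X * s₁ * s₁ * Yᴴ) ⊗ₖ (1 : Matrix ι₂ ι₂ ℂ) := by
    rw [← Matrix.mul_kronecker_mul, ← Matrix.mul_kronecker_mul, ← Matrix.mul_kronecker_mul,
      mul_one, mul_one, hVV]
  rw [mul_assoc σ, mul_assoc σ, mul_assoc σ, hk, trace_mul_kron_one]
  conv_lhs => rw [← mul_assoc, Matrix.trace_mul_comm _ Yᴴ]
  simp only [← mul_assoc]
end

section
/- Joint convexity of the resolvent quadratic form: for fixed operator Y on a finite-dimensional Hilbert space and t > 0, the map (A,B) ↦ Tr(Y* (L_B + t R_A)^{-1}(Y)) is jointly convex over pairs of positive definite matrices A, B, where L_B(X) = BX and R_A(X) = XA. -/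
open Matrix
open scoped ComplexOrder

section Helpers

variable {ι : Type*} [Fintype ι] [DecidableEq ι]

lemma trace_re_nonneg {M : Matrix ι ι ℂ} (hM : M.PosSemidef) : 0 ≤ M.trace.re := by
  have : (0:ℂ) ≤ M.trace := by
    rw [Matrix.trace]
    apply Finset.sum_nonneg
    intro i _
    exact hM.diag_nonneg
  exact_mod_cast (Complex.le_def.mp this).1

lemma quadB {B : Matrix ι ι ℂ} (hB : B.PosSemidef) (W : Matrix ι ι ℂ) :
    0 ≤ ((Wᴴ * (B * W)).trace).re := by
  have := hB.conjTranspose_mul_mul_same W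
  rw [← Matrix.mul_assoc]
  exact trace_re_nonneg this

lemma quadA {A : Matrix ι ι ℂ} (hA : A.PosSemidef) (W : Matrix ι ι ℂ) :
    0 ≤ ((Wᴴ * (W * A)).trace).re := by
  have h1 : (Wᴴ * (W * A)).trace = (Wᴴᴴ * A * Wᴴ).trace := by
    rw [conjTranspose_conjTranspose, trace_mul_comm]
  rw [h1]
  exact trace_re_nonneg (hA.conjTranspose_mul_mul_same _)

lemma symB {B P Q : Matrix ι ι ℂ} (hB : Bᴴ = B) :
    ((Qᴴ * (B * P)).trace).re = ((Pᴴ * (B * Q)).trace).re := by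
  have h : (Qᴴ * (B * P)).trace = star ((Pᴴ * (B * Q)).trace) := by
    rw [← trace_conjTranspose]
    congr 1
    simp [conjTranspose_mul, hB, Matrix.mul_assoc]
  rw [h, Complex.star_def, Complex.conj_re]

lemma symA {A P Q : Matrix ι ι ℂ} (hA : Aᴴ = A) :
    ((Qᴴ * (P * A)).trace).re = ((Pᴴ * (Q * A)).trace).re := by
  have h : (Qᴴ * (P * A)).trace = star ((Pᴴ * (Q * A)).trace) := by
    rw [← trace_conjTranspose]
    simp only [conjTranspose_mul, hA, conjTranspose_conjTranspose]
    rw [← Matrix.mul_assoc, trace_mul_cycle, Matrix.mul_assoc]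
  rw [h, Complex.star_def, Complex.conj_re]

lemma expandY {A B Y Z' : Matrix ι ι ℂ} {t : ℝ} (hA : Aᴴ = A) (hB : Bᴴ = B)
    (hZ' : B * Z' + (t : ℂ) • (Z' * A) = Y) (X : Matrix ι ι ℂ) :
    (Yᴴ * X).trace = (Z'ᴴ * (B * X)).trace + (t : ℂ) * (Z'ᴴ * (X * A)).trace := by
  subst hZ'
  simp only [conjTranspose_add, conjTranspose_smul, conjTranspose_mul, hA, hB,
    Matrix.add_mul, Matrix.smul_mul, trace_add, trace_smul, smul_eq_mul, Complex.star_def,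
    Complex.conj_ofReal, Matrix.mul_assoc]
  congr 1
  congr 1
  rw [← Matrix.mul_assoc, ← Matrix.mul_assoc, trace_mul_cycle, trace_mul_cycle]

lemma key {A B Y Z' : Matrix ι ι ℂ} {t : ℝ} (hA : A.PosSemidef) (hB : B.PosSemidef)
    (ht : 0 ≤ t) (hZ' : B * Z' + (t : ℂ) • (Z' * A) = Y) (X : Matrix ι ι ℂ) :
    2 * ((Yᴴ * X).trace).re - (((Xᴴ * (B * X)).trace).re + t * ((Xᴴ * (X * A)).trace).re)
      ≤ ((Yᴴ * Z').trace).re := by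
  have hq := quadB hB (Z' - X)
  have hq' := quadA hA (Z' - X)
  have hBexp : ((Z' - X)ᴴ * (B * (Z' - X))).trace
      = (Z'ᴴ * (B * Z')).trace - (Z'ᴴ * (B * X)).trace - (Xᴴ * (B * Z')).trace
        + (Xᴴ * (B * X)).trace := by
    simp only [conjTranspose_sub, Matrix.sub_mul, Matrix.mul_sub, trace_sub]
    ring
  have hAexp : ((Z' - X)ᴴ * ((Z' - X) * A)).trace
      = (Z'ᴴ * (Z' * A)).trace - (Z'ᴴ * (X * A)).trace - (Xᴴ * (Z' * A)).trace
        + (Xᴴ * (X * A)).trace := by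
    simp only [conjTranspose_sub, Matrix.sub_mul, Matrix.mul_sub, trace_sub]
    ring
  have e1 := expandY hA.1.eq hB.1.eq hZ' X
  have e2 := expandY hA.1.eq hB.1.eq hZ' Z'
  have s1 : ((Xᴴ * (B * Z')).trace).re = ((Z'ᴴ * (B * X)).trace).re := symB hB.1.eq
  have s2 : ((Xᴴ * (Z' * A)).trace).re = ((Z'ᴴ * (X * A)).trace).re := symA hA.1.eq
  have r1 := congrArg Complex.re hBexp
  have r2 := congrArg Complex.re hAexp
  have r3 := congrArg Complex.re e1
  have r4 := congrArg Complex.re e2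
  simp only [Complex.sub_re, Complex.add_re, Complex.mul_re, Complex.ofReal_re,
    Complex.ofReal_im, zero_mul, sub_zero] at r1 r2 r3 r4
  rw [r1, s1] at hq
  rw [r2, s2] at hq'
  have hq'' := mul_nonneg ht hq'
  linarith

end Helpers

/-- Joint convexity of `(A,B) ↦ Tr(Y*(L_B + tR_A)⁻¹(Y))` over positive definite matrices:
with `Z_i` solving `B_i Z_i + t Z_i A_i = Y` and `Z` solving the equation for the convex
combination, the value `Tr(Y* Z) = ⟨Y, (L_B+tR_A)⁻¹Y⟩` is jointly convex. -/
theorem resolvent_quadratic_form_jointly_convex {ι : Type*} [Fintype ι] [DecidableEq ι]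
    (Y : Matrix ι ι ℂ) (t : ℝ) (ht : 0 < t)
    (A₁ A₂ B₁ B₂ : Matrix ι ι ℂ)
    (hA₁ : A₁.PosDef) (hA₂ : A₂.PosDef) (hB₁ : B₁.PosDef) (hB₂ : B₂.PosDef)
    (s : ℝ) (hs : s ∈ Set.Ioo (0 : ℝ) 1)
    (Z₁ Z₂ Z : Matrix ι ι ℂ)
    (hZ₁ : B₁ * Z₁ + (t : ℂ) • (Z₁ * A₁) = Y)
    (hZ₂ : B₂ * Z₂ + (t : ℂ) • (Z₂ * A₂) = Y)
    (hZ : ((s : ℂ) • B₁ + ((1 - s : ℝ) : ℂ) • B₂) * Z +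
        (t : ℂ) • (Z * ((s : ℂ) • A₁ + ((1 - s : ℝ) : ℂ) • A₂)) = Y) :
    ((Yᴴ * Z).trace).re ≤ s * ((Yᴴ * Z₁).trace).re + (1 - s) * ((Yᴴ * Z₂).trace).re := by
  obtain ⟨hs0, hs1⟩ := hs
  have hs0' : (0:ℝ) ≤ s := hs0.le
  have hs1' : (0:ℝ) ≤ 1 - s := by linarith
  have k1 := key hA₁.posSemidef hB₁.posSemidef ht.le hZ₁ Z
  have k2 := key hA₂.posSemidef hB₂.posSemidef ht.le hZ₂ Z
  -- hermiticity of the convex combinations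
  have hBs : ((s : ℂ) • B₁ + ((1 - s : ℝ) : ℂ) • B₂)ᴴ
      = (s : ℂ) • B₁ + ((1 - s : ℝ) : ℂ) • B₂ := by
    simp [conjTranspose_add, conjTranspose_smul, hB₁.1.eq, hB₂.1.eq, Complex.star_def,
      Complex.conj_ofReal]
  have hAs : ((s : ℂ) • A₁ + ((1 - s : ℝ) : ℂ) • A₂)ᴴ
      = (s : ℂ) • A₁ + ((1 - s : ℝ) : ℂ) • A₂ := by
    simp [conjTranspose_add, conjTranspose_smul, hA₁.1.eq, hA₂.1.eq, Complex.star_def,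
      Complex.conj_ofReal]
  have e := expandY hAs hBs hZ Z
  have comb : (Yᴴ * Z).trace
      = (s : ℂ) * ((Zᴴ * (B₁ * Z)).trace + (t : ℂ) * (Zᴴ * (Z * A₁)).trace)
        + ((1 - s : ℝ) : ℂ) * ((Zᴴ * (B₂ * Z)).trace + (t : ℂ) * (Zᴴ * (Z * A₂)).trace) := by
    rw [e]
    simp only [Matrix.add_mul, Matrix.smul_mul, Matrix.mul_add, Matrix.mul_smul,
      trace_add, trace_smul, smul_eq_mul]
    ring
  have rc := congrArg Complex.re comb
  simp only [Complex.add_re, Complex.mul_re, Complex.ofReal_re, Complex.ofReal_im,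
    zero_mul, sub_zero] at rc
  nlinarith [mul_le_mul_of_nonneg_left k1 hs0', mul_le_mul_of_nonneg_left k2 hs1']
end

section
/- Nonnegativity of WYD-type skew information: for p ∈ (0,1), an invertible density matrix ρ, and a self-adjoint matrix K, one has −Tr([K, ρ^p][K, ρ^{1−p}]) ≥ 0, where [A,B] = AB − BA. -/
open Matrix
open scoped ComplexOrder

section aux
variable {ι : Type*} [Fintype ι]

lemma myMul_vecMulVec (M : Matrix ι ι ℂ) (v w : ι → ℂ) :
    M * vecMulVec v w = vecMulVec (M *ᵥ v) w := by
  ext a b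
  simp [mul_apply, vecMulVec_apply, mulVec, dotProduct, Finset.sum_mul]
  exact Finset.sum_congr rfl fun _ _ => by ring

lemma myVecMulVec_mul (v w : ι → ℂ) (M : Matrix ι ι ℂ) :
    vecMulVec v w * M = vecMulVec v (w ᵥ* M) := by
  ext a b
  simp [mul_apply, vecMulVec_apply, vecMul, dotProduct, Finset.mul_sum]
  exact Finset.sum_congr rfl fun _ _ => by ring

lemma myTrace_vecMulVec_mul (v w : ι → ℂ) (M : Matrix ι ι ℂ) :
    (vecMulVec v w * M).trace = w ⬝ᵥ (M *ᵥ v) := by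
  simp [Matrix.trace, Matrix.diag, mul_apply, vecMulVec_apply, dotProduct, mulVec,
    Finset.mul_sum]
  rw [Finset.sum_comm]
  exact Finset.sum_congr rfl fun _ _ => Finset.sum_congr rfl fun _ _ => by ring

lemma myDotProduct_sum (v : ι → ℂ) (w : ι → ι → ℂ) :
    v ⬝ᵥ (∑ k, w k) = ∑ k, v ⬝ᵥ w k := by
  simp [dotProduct, Finset.mul_sum]
  rw [Finset.sum_comm]

lemma mySum_mulVec (M : ι → Matrix ι ι ℂ) (x : ι → ℂ) :
    (∑ k, M k) *ᵥ x = ∑ k, M k *ᵥ x := by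
  ext a
  simp [mulVec, dotProduct, Matrix.sum_apply, Finset.sum_mul]
  rw [Finset.sum_comm]

lemma myMulVec_sum (M : Matrix ι ι ℂ) (x : ι → ι → ℂ) :
    M *ᵥ (∑ k, x k) = ∑ k, M *ᵥ x k := by
  ext a
  simp [mulVec, dotProduct, Finset.mul_sum]
  rw [Finset.sum_comm]

end aux

/-- The rank-one operator `|v⟩⟨v|`. -/
noncomputable def outer {ι : Type*} [Fintype ι] (v : ι → ℂ) : Matrix ι ι ℂ :=
  Matrix.vecMulVec v (star v)

section traces
variable {ι : Type*} [Fintype ι] (K : Matrix ι ι ℂ) (v w : ι → ℂ)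

lemma outer_mulVec (x : ι → ℂ) : outer w *ᵥ x = (star w ⬝ᵥ x) • w := by
  ext a
  simp [outer, mulVec, vecMulVec_apply, dotProduct, Finset.sum_mul]
  exact Finset.sum_congr rfl fun _ _ => by ring

lemma te1 : ((K * outer v) * (K * outer w)).trace
    = (star v ⬝ᵥ (K *ᵥ w)) * (star w ⬝ᵥ (K *ᵥ v)) := by
  rw [show K * outer v = vecMulVec (K *ᵥ v) (star v) from myMul_vecMulVec K v (star v),
    myTrace_vecMulVec_mul, ← Matrix.mulVec_mulVec, outer_mulVec, Matrix.mulVec_smul,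
    dotProduct_smul, smul_eq_mul, mul_comm]

lemma te2 : ((K * outer v) * (outer w * K)).trace
    = (star v ⬝ᵥ w) * (star w ⬝ᵥ (K *ᵥ (K *ᵥ v))) := by
  rw [show K * outer v = vecMulVec (K *ᵥ v) (star v) from myMul_vecMulVec K v (star v),
    myTrace_vecMulVec_mul, ← Matrix.mulVec_mulVec, outer_mulVec, Matrix.mulVec_mulVec,
    ← Matrix.mulVec_mulVec, dotProduct_smul, smul_eq_mul, mul_comm]

lemma te3 : ((outer v * K) * (K * outer w)).trace
    = (star w ⬝ᵥ v) * (star v ⬝ᵥ (K *ᵥ (K *ᵥ w))) := by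
  rw [show outer v * K = vecMulVec v (star v ᵥ* K) from myVecMulVec_mul v (star v) K,
    myTrace_vecMulVec_mul, ← Matrix.mulVec_mulVec, outer_mulVec, Matrix.mulVec_smul,
    dotProduct_smul, smul_eq_mul, Matrix.dotProduct_mulVec (star v) K]

lemma te4 : ((outer v * K) * (outer w * K)).trace
    = (star v ⬝ᵥ (K *ᵥ w)) * (star w ⬝ᵥ (K *ᵥ v)) := by
  rw [show outer v * K = vecMulVec v (star v ᵥ* K) from myVecMulVec_mul v (star v) K,
    myTrace_vecMulVec_mul, ← Matrix.mulVec_mulVec, outer_mulVec,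
    dotProduct_smul, smul_eq_mul, Matrix.dotProduct_mulVec (star v) K, mul_comm]

end traces

/-- Nonnegativity of the Wigner–Yanase–Dyson-type skew information: for `p ∈ (0,1)`,
an invertible density matrix `ρ` (with spectral decomposition `ρ = Σ_j λ_j |ψ_j⟩⟨ψ_j|`,
so that `ρ^p = Σ_j λ_j^p |ψ_j⟩⟨ψ_j|`), and self-adjoint `K`, one has
`−Tr([K,ρ^p][K,ρ^{1−p}]) ≥ 0` (and this trace is real). -/
theorem wyd_skew_information_nonneg {ι : Type*} [Fintype ι] [DecidableEq ι]
    (p : ℝ) (hp : p ∈ Set.Ioo (0 : ℝ) 1)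
    (ρ ρp ρ1p K : Matrix ι ι ℂ) (hK : Kᴴ = K)
    (lam : ι → ℝ) (ψ : ι → ι → ℂ)
    (hψ : ∀ i j, star (ψ i) ⬝ᵥ ψ j = if i = j then 1 else 0)
    (hlam : ∀ j, 0 < lam j) (htr : ∑ j, lam j = 1)
    (hρ : ρ = ∑ j, (lam j : ℂ) • outer (ψ j))
    (hρp : ρp = ∑ j, ((lam j ^ p : ℝ) : ℂ) • outer (ψ j))
    (hρ1p : ρ1p = ∑ j, ((lam j ^ (1 - p) : ℝ) : ℂ) • outer (ψ j)) :
    0 ≤ (-(((K * ρp - ρp * K) * (K * ρ1p - ρ1p * K)).trace)).re ∧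
      (((K * ρp - ρp * K) * (K * ρ1p - ρ1p * K)).trace).im = 0 := by
  classical
  set a : ι → ℝ := fun i => lam i ^ p with ha
  set b : ι → ℝ := fun i => lam i ^ (1 - p) with hb
  set c : ι → ι → ℂ := fun i j => star (ψ i) ⬝ᵥ (K *ᵥ ψ j) with hc
  set r : ι → ι → ℝ := fun i j => Complex.normSq (c i j) with hr
  -- hermiticity of the matrix elements
  have hstar : ∀ i j, (starRingEnd ℂ) (c i j) = c j i := by
    intro i j
    rw [hc]
    show star (star (ψ i) ⬝ᵥ (K *ᵥ ψ j)) = star (ψ j) ⬝ᵥ (K *ᵥ ψ i)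
    rw [star_dotProduct (ψ i) (K *ᵥ ψ j), star_star, Matrix.star_mulVec, hK,
      ← Matrix.dotProduct_mulVec]
  have hcc : ∀ i j, c i j * c j i = ((r i j : ℝ) : ℂ) := by
    intro i j
    rw [← hstar i j, Complex.mul_conj]
  have hrs : ∀ i j, r i j = r j i := by
    intro i j
    rw [hr]
    show Complex.normSq (c i j) = Complex.normSq (c j i)
    rw [← hstar i j, Complex.normSq_conj]
  -- completeness
  have hone : (∑ j, outer (ψ j)) = (1 : Matrix ι ι ℂ) := by
    set U : Matrix ι ι ℂ := Matrix.of fun x y => ψ y x with hU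
    have hUU : Uᴴ * U = 1 := by
      ext i j
      have := hψ i j
      simpa [Matrix.mul_apply, Matrix.conjTranspose_apply, hU, Matrix.one_apply,
        dotProduct] using this
    have hUUc : U * Uᴴ = 1 := mul_eq_one_comm.mp hUU
    calc (∑ j, outer (ψ j)) = U * Uᴴ := by
          ext x y
          simp [outer, Matrix.sum_apply, vecMulVec_apply, Matrix.mul_apply,
            Matrix.conjTranspose_apply, hU, mul_comm]
      _ = 1 := hUUc
  -- diagonal second moment
  have hq : ∀ i, star (ψ i) ⬝ᵥ (K *ᵥ (K *ᵥ ψ i)) = ∑ k, ((r i k : ℝ) : ℂ) := by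
    intro i
    have h1 : K *ᵥ ψ i = ∑ k, c k i • ψ k := by
      conv_lhs => rw [← Matrix.one_mulVec (K *ᵥ ψ i), ← hone]
      rw [mySum_mulVec]
      exact Finset.sum_congr rfl fun k _ => by rw [outer_mulVec]
    conv_lhs => rw [h1, myMulVec_sum]
    rw [myDotProduct_sum]
    refine Finset.sum_congr rfl fun k _ => ?_
    rw [show K *ᵥ (c k i • ψ k) = c k i • (K *ᵥ ψ k) from Matrix.mulVec_smul K _ _,
      dotProduct_smul, smul_eq_mul]
    rw [show star (ψ i) ⬝ᵥ (K *ᵥ ψ k) = c i k from rfl, mul_comm, hcc i k]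
  -- expansion
  have hA : K * ρp - ρp * K = ∑ i, ((a i : ℝ) : ℂ) • (K * outer (ψ i) - outer (ψ i) * K) := by
    rw [hρp, Finset.mul_sum, Finset.sum_mul, ← Finset.sum_sub_distrib]
    exact Finset.sum_congr rfl fun i _ => by
      rw [mul_smul_comm, smul_mul_assoc, smul_sub]
  have hB : K * ρ1p - ρ1p * K = ∑ j, ((b j : ℝ) : ℂ) • (K * outer (ψ j) - outer (ψ j) * K) := by
    rw [hρ1p, Finset.mul_sum, Finset.sum_mul, ← Finset.sum_sub_distrib]
    exact Finset.sum_congr rfl fun j _ => by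
      rw [mul_smul_comm, smul_mul_assoc, smul_sub]
  have key : ((K * ρp - ρp * K) * (K * ρ1p - ρ1p * K)).trace
      = ∑ i, ∑ j, ((a i : ℝ) : ℂ) * ((b j : ℝ) : ℂ) *
          (2 * ((r i j : ℝ) : ℂ) - (if i = j then (2:ℂ) else 0) * (∑ k, ((r i k : ℝ) : ℂ))) := by
    rw [hA, hB, Finset.sum_mul, Matrix.trace_sum]
    refine Finset.sum_congr rfl fun i _ => ?_
    rw [Finset.mul_sum, Matrix.trace_sum]
    refine Finset.sum_congr rfl fun j _ => ?_
    rw [smul_mul_assoc, mul_smul_comm, Matrix.trace_smul, Matrix.trace_smul,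
      smul_eq_mul, smul_eq_mul, ← mul_assoc]
    congr 1
    rw [sub_mul, mul_sub, mul_sub, Matrix.trace_sub, Matrix.trace_sub, Matrix.trace_sub,
      te1, te2, te3, te4, hψ i j, hψ j i, hcc i j]
    by_cases h : i = j
    · subst h
      simp only [eq_self_iff_true, if_true]
      rw [hq i]
      ring
    · rw [if_neg h, if_neg (Ne.symm h), if_neg h]
      ring
  have key2 : ((K * ρp - ρp * K) * (K * ρ1p - ρ1p * K)).trace
      = (((∑ i, ∑ j, a i * b j * (2 * r i j - (if i = j then 2 else 0) * ∑ k, r i k)) : ℝ) : ℂ) := by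
    rw [key]
    push_cast
    refine Finset.sum_congr rfl fun i _ => Finset.sum_congr rfl fun j _ => ?_
    by_cases h : i = j <;> simp [h] <;> push_cast <;> ring
  set T0 : ℝ := ∑ i, ∑ j, a i * b j * (2 * r i j - (if i = j then 2 else 0) * ∑ k, r i k)
    with hT0def
  have hT0 : T0 = ∑ i, ∑ j, (2 * (a i * b j) * r i j - 2 * (a i * b i) * r i j) := by
    rw [hT0def]
    refine Finset.sum_congr rfl fun i _ => ?_
    simp only [mul_sub, Finset.sum_sub_distrib]
    congr 1
    · exact Finset.sum_congr rfl fun j _ => by ring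
    · rw [show (∑ j, a i * b j * ((if i = j then (2:ℝ) else 0) * ∑ k, r i k))
          = ∑ j, (if i = j then a i * b j * (2 * ∑ k, r i k) else 0) from
            Finset.sum_congr rfl fun j _ => by by_cases h : i = j <;> simp [h],
        Finset.sum_ite_eq, if_pos (Finset.mem_univ i)]
      simp only [Finset.mul_sum]
      exact Finset.sum_congr rfl fun j _ => by ring
  have hnn : ∀ i j, 0 ≤ (a i - a j) * (b i - b j) := by
    intro i j
    rcases le_total (lam i) (lam j) with h | h
    · have h1 : a i ≤ a j := Real.rpow_le_rpow (hlam i).le h hp.1.le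
      have h2 : b i ≤ b j := Real.rpow_le_rpow (hlam i).le h (by linarith [hp.2])
      nlinarith
    · have h1 : a j ≤ a i := Real.rpow_le_rpow (hlam j).le h hp.1.le
      have h2 : b j ≤ b i := Real.rpow_le_rpow (hlam j).le h (by linarith [hp.2])
      nlinarith
  have hrnn : ∀ i j, (0:ℝ) ≤ r i j := fun i j => Complex.normSq_nonneg _
  have hneg : 0 ≤ -T0 := by
    have hdouble : 2 * (-T0) = ∑ i, ∑ j, (a i - a j) * (b i - b j) * (2 * r i j) := by
      have hswap : (∑ i, ∑ j, (2 * (a i * b i) * r i j - 2 * (a i * b j) * r i j))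
          = ∑ i, ∑ j, (2 * (a j * b j) * r j i - 2 * (a j * b i) * r j i) := by
        rw [Finset.sum_comm]
      have hT0' : -T0 = ∑ i, ∑ j, (2 * (a i * b i) * r i j - 2 * (a i * b j) * r i j) := by
        rw [hT0, ← Finset.sum_neg_distrib]
        refine Finset.sum_congr rfl fun i _ => ?_
        rw [← Finset.sum_neg_distrib]
        exact Finset.sum_congr rfl fun j _ => by ring
      calc 2 * (-T0) = (∑ i, ∑ j, (2 * (a i * b i) * r i j - 2 * (a i * b j) * r i j))
            + ∑ i, ∑ j, (2 * (a j * b j) * r j i - 2 * (a j * b i) * r j i) := by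
              rw [← hswap, hT0']; ring
        _ = ∑ i, ∑ j, ((2 * (a i * b i) * r i j - 2 * (a i * b j) * r i j)
            + (2 * (a j * b j) * r j i - 2 * (a j * b i) * r j i)) := by
              rw [← Finset.sum_add_distrib]
              exact Finset.sum_congr rfl fun i _ => (Finset.sum_add_distrib).symm
        _ = ∑ i, ∑ j, (a i - a j) * (b i - b j) * (2 * r i j) := by
              refine Finset.sum_congr rfl fun i _ => Finset.sum_congr rfl fun j _ => ?_
              rw [hrs j i]
              ring
    have hpos : 0 ≤ ∑ i, ∑ j, (a i - a j) * (b i - b j) * (2 * r i j) :=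
      Finset.sum_nonneg fun i _ => Finset.sum_nonneg fun j _ =>
        mul_nonneg (hnn i j) (by linarith [hrnn i j])
    linarith
  constructor
  · rw [key2, ← Complex.ofReal_neg, Complex.ofReal_re]
    exact hneg
  · rw [key2]
    exact Complex.ofReal_im _
end
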